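/- Let λ > 0, a₁ ≥ 0, t₀ > 0, let g : ℝ → ℝ be a nonnegative continuous function, and let y : ℝ → ℝ be a nonnegative function, differentiable on [t₀, ∞), satisfying y'(t) + λ·y(t) ≤ g(t) for all t ≥ t₀ and ∫_{t}^{t+1} g(s) ds ≤ a₁ for all t ≥ t₀. Then for every ε > 0 there exists t* ≥ t₀ (depending on ε, t₀ and y(t₀)) such that for all t ≥ t*, y(t) ≤ a₁·e^{2λ}/(e^{λ} − 1) + ε; in particular y is eventually bounded by a constant depending only on λ and a₁, and not on the initial value y(t₀). -/

import Mathlib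

open Real Set intervalIntegral Filter

/-- Variant of the uniform Gronwall lemma: a linearly damped differential inequality with
forcing whose integral over every unit interval is bounded by `a₁` gives an eventual bound
independent of the initial data. -/
theorem uniform_gronwall_variant (lam a₁ t₀ : ℝ)
    (hlam : 0 < lam) (ha₁ : 0 ≤ a₁) (ht₀ : 0 < t₀)
    (g y y' : ℝ → ℝ) (hg : Continuous g)
    (hg0 : ∀ t, 0 ≤ g t) (hy0 : ∀ t, 0 ≤ y t)
    (hy : ∀ t ∈ Set.Ici t₀, HasDerivWithinAt y (y' t) (Set.Ici t₀) t)
    (hineq : ∀ t ∈ Set.Ici t₀, y' t + lam * y t ≤ g t)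
    (hgint : ∀ t ∈ Set.Ici t₀, (∫ s in t..(t + 1), g s) ≤ a₁) :
    ∀ ε > (0 : ℝ), ∃ tstar : ℝ, t₀ ≤ tstar ∧
      ∀ t ≥ tstar, y t ≤ a₁ * Real.exp (2 * lam) / (Real.exp lam - 1) + ε := by
  intro ε hε
  set E := Real.exp lam with hE
  have hE1 : 1 < E := by
    rw [hE, ← Real.exp_zero]; exact Real.exp_lt_exp.mpr hlam
  have hE0 : (0:ℝ) < E - 1 := by linarith
  -- continuity of the integrand
  have hcont : Continuous (fun s => Real.exp (lam * s) * g s) :=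
    ((Real.continuous_exp.comp (continuous_const.mul continuous_id)).mul hg)
  -- the auxiliary function
  set F : ℝ → ℝ := fun x => Real.exp (lam * x) * y x - ∫ s in t₀..x, Real.exp (lam * s) * g s
    with hFdef
  have he : ∀ x : ℝ, HasDerivAt (fun x => Real.exp (lam * x)) (lam * Real.exp (lam * x)) x := by
    intro x
    have h1 : HasDerivAt (fun x : ℝ => lam * x) lam x := by
      simpa using (hasDerivAt_id x).const_mul lam
    simpa [mul_comm] using h1.exp
  have hI : ∀ x : ℝ, HasDerivAt (fun x => ∫ s in t₀..x, Real.exp (lam * s) * g s)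
      (Real.exp (lam * x) * g x) x := fun x => (hcont.integral_hasStrictDerivAt t₀ x).hasDerivAt
  have hF' : ∀ x ∈ Ici t₀, HasDerivWithinAt F
      (Real.exp (lam * x) * (y' x + lam * y x - g x)) (Ici t₀) x := by
    intro x hx
    have h1 := ((he x).hasDerivWithinAt.mul (hy x hx)).sub (hI x).hasDerivWithinAt
    refine h1.congr_deriv ?_
    ring
  have hFc : ContinuousOn F (Ici t₀) := by
    apply ContinuousOn.sub
    · exact (Real.continuous_exp.comp (continuous_const.mul continuous_id)).continuousOn.mul
        (fun x hx => (hy x hx).continuousWithinAt)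
    · exact fun x _ => ((hI x).continuousAt).continuousWithinAt
  have hanti : AntitoneOn F (Ici t₀) := by
    apply antitoneOn_of_deriv_nonpos (convex_Ici t₀) hFc
    · intro x hx
      rw [interior_Ici] at hx
      exact (((hF' x (mem_Ici.mpr (le_of_lt (mem_Ioi.mp hx)))).hasDerivAt (Ici_mem_nhds hx)).differentiableAt).differentiableWithinAt
    · intro x hx
      rw [interior_Ici] at hx
      rw [((hF' x (mem_Ici.mpr (le_of_lt (mem_Ioi.mp hx)))).hasDerivAt (Ici_mem_nhds hx)).deriv]
      have := hineq x (mem_Ici.mpr (le_of_lt (mem_Ioi.mp hx)))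
      have hexp : (0:ℝ) < Real.exp (lam * x) := Real.exp_pos _
      nlinarith
  -- the key integral inequality
  have key : ∀ u, t₀ ≤ u → ∀ t, u ≤ t →
      Real.exp (lam * t) * y t ≤ Real.exp (lam * u) * y u + ∫ s in u..t, Real.exp (lam * s) * g s := by
    intro u hu t hut
    have h := hanti hu (le_trans hu hut) hut
    have hsplit : (∫ s in t₀..u, Real.exp (lam * s) * g s) + ∫ s in u..t, Real.exp (lam * s) * g s
        = ∫ s in t₀..t, Real.exp (lam * s) * g s :=
      integral_add_adjacent_intervals (hcont.intervalIntegrable _ _) (hcont.intervalIntegrable _ _)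
    simp only [hFdef] at h
    linarith
  -- coarse step: y t ≤ y u + a₁ for u ≤ t ≤ u + 1
  have coarse : ∀ u, t₀ ≤ u → ∀ t, u ≤ t → t ≤ u + 1 → y t ≤ y u + a₁ := by
    intro u hu t hut htu
    have h := key u hu t hut
    have hexpT : (0:ℝ) < Real.exp (lam * t) := Real.exp_pos _
    have hi1 : (∫ s in u..t, Real.exp (lam * s) * g s) ≤ Real.exp (lam * t) * ∫ s in u..t, g s := by
      rw [← intervalIntegral.integral_const_mul]
      apply intervalIntegral.integral_mono_on hut (hcont.intervalIntegrable _ _)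
        ((continuous_const.mul hg).intervalIntegrable _ _)
      intro s hs
      exact mul_le_mul_of_nonneg_right
        (Real.exp_le_exp.mpr (mul_le_mul_of_nonneg_left hs.2 hlam.le)) (hg0 s)
    have hi2 : (∫ s in u..t, g s) ≤ ∫ s in u..(u+1), g s := by
      have hsplit : (∫ s in u..t, g s) + ∫ s in t..(u+1), g s = ∫ s in u..(u+1), g s :=
        integral_add_adjacent_intervals (hg.intervalIntegrable _ _) (hg.intervalIntegrable _ _)
      have hpos : 0 ≤ ∫ s in t..(u+1), g s :=
        intervalIntegral.integral_nonneg htu (fun s _ => hg0 s)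
      linarith
    have hi3 : (∫ s in u..(u+1), g s) ≤ a₁ := hgint u hu
    have hmono : Real.exp (lam * u) * y u ≤ Real.exp (lam * t) * y u :=
      mul_le_mul_of_nonneg_right
        (Real.exp_le_exp.mpr (mul_le_mul_of_nonneg_left hut hlam.le)) (hy0 u)
    have : Real.exp (lam * t) * y t ≤ Real.exp (lam * t) * (y u + a₁) := by nlinarith
    exact le_of_mul_le_mul_left (by linarith [this]) hexpT
  -- unit step with decay
  have step : ∀ u, t₀ ≤ u → y (u + 1) ≤ Real.exp (-lam) * y u + a₁ := by
    intro u hu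
    have h := key u hu (u+1) (by linarith)
    have hexpT : (0:ℝ) < Real.exp (lam * (u+1)) := Real.exp_pos _
    have hi1 : (∫ s in u..(u+1), Real.exp (lam * s) * g s)
        ≤ Real.exp (lam * (u+1)) * ∫ s in u..(u+1), g s := by
      rw [← intervalIntegral.integral_const_mul]
      apply intervalIntegral.integral_mono_on (by linarith) (hcont.intervalIntegrable _ _)
        ((continuous_const.mul hg).intervalIntegrable _ _)
      intro s hs
      exact mul_le_mul_of_nonneg_right
        (Real.exp_le_exp.mpr (mul_le_mul_of_nonneg_left hs.2 hlam.le)) (hg0 s)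
    have hi3 : (∫ s in u..(u+1), g s) ≤ a₁ := hgint u hu
    have hprod : Real.exp (lam * (u+1)) * Real.exp (-lam) = Real.exp (lam * u) := by
      rw [← Real.exp_add]; ring_nf
    have : Real.exp (lam * (u+1)) * y (u+1)
        ≤ Real.exp (lam * (u+1)) * (Real.exp (-lam) * y u + a₁) := by
      have h2 : Real.exp (lam * (u+1)) * ∫ s in u..(u+1), g s ≤ Real.exp (lam * (u+1)) * a₁ :=
        mul_le_mul_of_nonneg_left hi3 hexpT.le
      calc Real.exp (lam * (u+1)) * y (u+1)
          ≤ Real.exp (lam * u) * y u + ∫ s in u..(u+1), Real.exp (lam * s) * g s := h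
        _ ≤ Real.exp (lam * u) * y u + Real.exp (lam * (u+1)) * a₁ := by linarith
        _ = Real.exp (lam * (u+1)) * (Real.exp (-lam) * y u + a₁) := by
            rw [← hprod]; ring
    exact le_of_mul_le_mul_left this hexpT
  -- discrete iteration
  set B : ℝ := a₁ * E / (E - 1) with hB
  have hBnn : 0 ≤ B := by positivity
  have iter : ∀ n : ℕ, y (t₀ + n) ≤ Real.exp (-(lam * n)) * y t₀ + B := by
    intro n
    induction n with
    | zero => simp only [Nat.cast_zero, add_zero, mul_zero, neg_zero, Real.exp_zero, one_mul]; linarith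
    | succ n ih =>
      have hstep := step (t₀ + n) (by linarith [Nat.cast_nonneg (α := ℝ) n])
      have heq : t₀ + (n+1 : ℕ) = (t₀ + n) + 1 := by push_cast; ring
      have hexpneg : (0:ℝ) < Real.exp (-lam) := Real.exp_pos _
      have hkey : Real.exp (-lam) * B + a₁ = B := by
        have hEe : Real.exp (-lam) = E⁻¹ := by rw [hE, ← Real.exp_neg]
        rw [hEe, hB]
        field_simp
        ring
      have hchain : y (t₀ + (n+1:ℕ)) ≤ Real.exp (-lam) * (Real.exp (-(lam * n)) * y t₀ + B) + a₁ := by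
        rw [heq]
        exact le_trans hstep (by nlinarith)
      have hmul : Real.exp (-lam) * Real.exp (-(lam * n)) = Real.exp (-(lam * (n+1:ℕ))) := by
        rw [← Real.exp_add]; push_cast; ring_nf
      calc y (t₀ + (n+1:ℕ)) ≤ Real.exp (-lam) * (Real.exp (-(lam * n)) * y t₀ + B) + a₁ := hchain
        _ = Real.exp (-(lam * (n+1:ℕ))) * y t₀ + (Real.exp (-lam) * B + a₁) := by
            rw [← hmul]; ring
        _ = Real.exp (-(lam * (n+1:ℕ))) * y t₀ + B := by rw [hkey]
  -- choose N
  have htend : Tendsto (fun n : ℕ => Real.exp (-(lam * n)) * y t₀) atTop (nhds 0) := by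
    have h1 : Tendsto (fun n : ℕ => Real.exp (-(lam * n))) atTop (nhds 0) := by
      have : ∀ n : ℕ, Real.exp (-(lam * n)) = (Real.exp (-lam))^n := by
        intro n; rw [← Real.exp_nat_mul]; ring_nf
      simp only [this]
      exact tendsto_pow_atTop_nhds_zero_of_lt_one (Real.exp_pos _).le
        (Real.exp_lt_one_iff.mpr (by linarith))
    simpa using h1.mul_const (y t₀)
  obtain ⟨N, hN⟩ : ∃ N : ℕ, Real.exp (-(lam * N)) * y t₀ ≤ ε := by
    have := (htend.eventually (eventually_le_nhds hε)).exists
    exact this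
  refine ⟨t₀ + N, by linarith [Nat.cast_nonneg (α := ℝ) N], ?_⟩
  intro t ht
  -- pick n = ⌊t - t₀⌋
  have htt : (N : ℝ) ≤ t - t₀ := by linarith
  set n : ℕ := ⌊t - t₀⌋₊ with hn
  have hnle : (n : ℝ) ≤ t - t₀ := Nat.floor_le (by linarith [Nat.cast_nonneg (α := ℝ) N])
  have hnlt : t - t₀ < n + 1 := Nat.lt_floor_add_one _
  have hNn : N ≤ n := Nat.le_floor htt
  have h1 : y t ≤ y (t₀ + n) + a₁ := coarse (t₀ + n) (by linarith [Nat.cast_nonneg (α := ℝ) n]) t (by linarith) (by linarith)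
  have h2 := iter n
  have h3 : Real.exp (-(lam * n)) * y t₀ ≤ Real.exp (-(lam * N)) * y t₀ := by
    apply mul_le_mul_of_nonneg_right _ (hy0 t₀)
    apply Real.exp_le_exp.mpr
    have : (N : ℝ) ≤ n := Nat.cast_le.mpr hNn
    nlinarith
  have hBound : B + a₁ ≤ a₁ * Real.exp (2 * lam) / (E - 1) := by
    have hE2 : Real.exp (2 * lam) = E * E := by rw [hE, ← Real.exp_add]; ring_nf
    rw [hE2, hB, div_add' _ _ _ (ne_of_gt hE0), div_le_div_iff₀ hE0 hE0]
    nlinarith [mul_nonneg (mul_nonneg ha₁ hE0.le) (sq_nonneg (E - 1))]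
  have : y t ≤ ε + (B + a₁) := by linarith
  rw [hE] at hBound
  linarith
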